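/- Let (g,[-,-],α) be a regular hom-Lie algebra over a commutative ring R, i.e. α is an R-module automorphism of g with α([x,y]) = [α(x),α(y)]. For any integer s, define ad_s: g → End_R(g) by ad_s(x)(y) = [α^s(x), y]. Then the pair (ad_s, α) is a representation of (g,[-,-],α) on g; that is, ad_s(α(x))∘α = α∘ad_s(x) and ad_s([x,y])∘α = ad_s(α(x))∘ad_s(y) − ad_s(α(y))∘ad_s(x) for all x,y ∈ g. -/

import Mathlib

private lemma zpow_comm_apply {R g : Type*} [CommRing R] [AddCommGroup g] [Module R g]
    (α : g ≃ₗ[R] g) (s : ℤ) (x : g) : (α ^ s) (α x) = α ((α ^ s) x) := by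
  have h : α ^ s * α = α * α ^ s := by
    rw [← zpow_add_one, ← zpow_one_add, add_comm]
  exact congrArg (fun e : g ≃ₗ[R] g => e x) h

private lemma zpow_br {R g : Type*} [CommRing R] [AddCommGroup g] [Module R g]
    (br : g → g → g) (α : g ≃ₗ[R] g)
    (α_br : ∀ x y : g, α (br x y) = br (α x) (α y)) (s : ℤ) :
    ∀ x y : g, (α ^ s) (br x y) = br ((α ^ s) x) ((α ^ s) y) := by
  have k : ∀ z : g, α (α⁻¹ z) = z := by
    intro z
    have h1 : (α * α⁻¹ : g ≃ₗ[R] g) = 1 := mul_inv_cancel α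
    calc α (α⁻¹ z) = (α * α⁻¹) z := rfl
      _ = (1 : g ≃ₗ[R] g) z := by rw [h1]
      _ = z := rfl
  have inv_br : ∀ x y : g, α⁻¹ (br x y) = br (α⁻¹ x) (α⁻¹ y) := by
    intro x y
    apply α.injective
    rw [α_br, k, k, k]
  induction s using Int.induction_on with
  | zero => simp
  | succ n ih =>
    intro x y
    have h : (α : g ≃ₗ[R] g) ^ ((n : ℤ) + 1) = α * α ^ (n : ℤ) := by
      rw [← zpow_one_add, add_comm]
    rw [h]
    show α ((α ^ (n : ℤ)) (br x y)) = br (α ((α ^ (n : ℤ)) x)) (α ((α ^ (n : ℤ)) y))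
    rw [ih, α_br]
  | pred n ih =>
    intro x y
    have h : (α : g ≃ₗ[R] g) ^ (-(n : ℤ) - 1) = α⁻¹ * α ^ (-(n : ℤ)) := by
      rw [sub_eq_add_neg, add_comm, ← zpow_neg_one, ← zpow_add]
    rw [h]
    show α⁻¹ ((α ^ (-(n : ℤ))) (br x y)) = br (α⁻¹ ((α ^ (-(n : ℤ))) x)) (α⁻¹ ((α ^ (-(n : ℤ))) y))
    rw [ih, inv_br]

theorem adjoint_rep_of_regular_homLie (R : Type*) (g : Type*) [CommRing R]
    [AddCommGroup g] [Module R g]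
    (br : g → g → g)
    (br_add_left : ∀ x y z : g, br (x + y) z = br x z + br y z)
    (br_smul_left : ∀ (r : R) (x y : g), br (r • x) y = r • br x y)
    (br_skew : ∀ x y : g, br x y = - br y x)
    (α : g ≃ₗ[R] g)
    (α_br : ∀ x y : g, α (br x y) = br (α x) (α y))
    (hom_jacobi : ∀ x y z : g,
      br (α x) (br y z) + br (α y) (br z x) + br (α z) (br x y) = 0)
    (s : ℤ) :
    (∀ x v : g, br ((α ^ s) (α x)) (α v) = α (br ((α ^ s) x) v)) ∧
    (∀ x y v : g,
      br ((α ^ s) (br x y)) (α v)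
        = br ((α ^ s) (α x)) (br ((α ^ s) y) v) - br ((α ^ s) (α y)) (br ((α ^ s) x) v)) := by
  have br_zero_left : ∀ w : g, br 0 w = 0 := by
    intro w
    have h := br_add_left 0 0 w
    rw [add_zero] at h
    exact (left_eq_add.mp h)
  have br_neg_left : ∀ u w : g, br (-u) w = - br u w := by
    intro u w
    have h := br_add_left u (-u) w
    rw [add_neg_cancel, br_zero_left] at h
    have h0 : br (-u) w + br u w = 0 := by rw [add_comm]; exact h.symm
    exact eq_neg_of_add_eq_zero_left h0
  constructor
  · intro x v
    rw [zpow_comm_apply, α_br]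
  · intro x y v
    rw [zpow_br br α α_br, zpow_comm_apply, zpow_comm_apply]
    set a := (α ^ s) x
    set b := (α ^ s) y
    have j := hom_jacobi a b v
    have hC : br (α v) (br a b)
        = -(br (α a) (br b v) + br (α b) (br v a)) :=
      eq_neg_of_add_eq_zero_left (by rw [← j]; abel)
    have h2 : br (α b) (br v a) = - br (α b) (br a v) := by
      rw [br_skew v a, br_skew (α b) (- br a v), br_neg_left, br_skew (br a v) (α b)]
      abel
    rw [br_skew (br a b) (α v), hC, neg_neg, h2]
    abel
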